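/- Fix σ₁, σ₂ > 0, α ∈ (0.5, 1), and let R = √2·s. The function h(s) = Φ((σ₂/σ₁)Φ⁻¹(α) + R/σ₁ − s/σ₁) − Φ(−(σ₂/σ₁)Φ⁻¹(α) − R/σ₁ − s/σ₁) is strictly increasing in s for s ≥ 0, and h(s) → 1 as s → ∞. -/

import Mathlib

open MeasureTheory ProbabilityTheory Filter

/-- Standard normal CDF. -/
noncomputable def Phi (t : ℝ) : ℝ := ((gaussianReal 0 1) (Set.Iic t)).toReal

/-- Standard normal quantile function. -/
noncomputable def PhiInv (p : ℝ) : ℝ := sInf {t : ℝ | p ≤ Phi t}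

lemma Phi_eq_cdf : Phi = cdf (gaussianReal 0 1) := by
  funext t; rw [cdf_eq_real]; rfl

lemma Phi_strictMono : StrictMono Phi := by
  intro a b hab
  have hmeas : 0 < gaussianReal 0 1 (Set.Ioc a b) := by
    by_contra hc
    push_neg at hc
    have h0 : gaussianReal 0 1 (Set.Ioc a b) = 0 := le_antisymm hc zero_le
    have hv := gaussianReal_absolutelyContinuous' (0 : ℝ) (v := 1) (by norm_num) h0
    rw [Real.volume_Ioc] at hv
    rw [ENNReal.ofReal_eq_zero] at hv
    linarith [sub_pos.2 hab]
  have hunion : Set.Iic a ∪ Set.Ioc a b = Set.Iic b := Set.Iic_union_Ioc_eq_Iic hab.le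
  have hdisj : Disjoint (Set.Iic a) (Set.Ioc a b) := by
    rw [Set.disjoint_left]
    intro x hx hx'
    exact absurd hx'.1 (not_lt.2 hx)
  have hsum : gaussianReal 0 1 (Set.Iic b)
      = gaussianReal 0 1 (Set.Iic a) + gaussianReal 0 1 (Set.Ioc a b) := by
    rw [← hunion, measure_union hdisj measurableSet_Ioc]
  have hlt : gaussianReal 0 1 (Set.Iic a) < gaussianReal 0 1 (Set.Iic b) := by
    rw [hsum]
    exact ENNReal.lt_add_right (measure_ne_top _ _) hmeas.ne'
  exact ENNReal.toReal_lt_toReal (measure_ne_top _ _) (measure_ne_top _ _) |>.mpr hlt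

lemma Phi_tendsto_atTop : Tendsto Phi atTop (nhds 1) := by
  rw [Phi_eq_cdf]; exact tendsto_cdf_atTop _

lemma Phi_tendsto_atBot : Tendsto Phi atBot (nhds 0) := by
  rw [Phi_eq_cdf]; exact tendsto_cdf_atBot _

theorem stmt10 (σ₁ σ₂ : ℝ) (hσ₁ : 0 < σ₁) (hσ₂ : 0 < σ₂)
    (α : ℝ) (hα : α ∈ Set.Ioo (1 / 2 : ℝ) 1)
    (h : ℝ → ℝ)
    (hh : h = fun s => Phi ((σ₂ / σ₁) * PhiInv α + Real.sqrt 2 * s / σ₁ - s / σ₁) -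
      Phi (-(σ₂ / σ₁) * PhiInv α - Real.sqrt 2 * s / σ₁ - s / σ₁)) :
    StrictMonoOn h (Set.Ici 0) ∧ Tendsto h atTop (nhds 1) := by
  have hs2 : (1 : ℝ) < Real.sqrt 2 := by
    nlinarith [Real.sq_sqrt (by norm_num : (2:ℝ) ≥ 0), Real.sqrt_nonneg 2]
  have hinv : (0 : ℝ) < σ₁⁻¹ := inv_pos.2 hσ₁
  set c : ℝ := (σ₂ / σ₁) * PhiInv α with hc
  constructor
  · intro a _ b _ hab
    rw [hh]
    simp only [show -(σ₂ / σ₁) * PhiInv α = -c from by rw [hc]; ring]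
    have h1 : c + Real.sqrt 2 * a / σ₁ - a / σ₁ < c + Real.sqrt 2 * b / σ₁ - b / σ₁ := by
      rw [div_eq_mul_inv, div_eq_mul_inv, div_eq_mul_inv, div_eq_mul_inv]
      nlinarith [mul_pos (mul_pos (sub_pos.2 hs2) (sub_pos.2 hab)) hinv]
    have h2 : -c - Real.sqrt 2 * b / σ₁ - b / σ₁ < -c - Real.sqrt 2 * a / σ₁ - a / σ₁ := by
      rw [div_eq_mul_inv, div_eq_mul_inv, div_eq_mul_inv, div_eq_mul_inv]
      nlinarith [mul_pos (mul_pos (by linarith : (0:ℝ) < Real.sqrt 2 + 1) (sub_pos.2 hab)) hinv]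
    have := Phi_strictMono h1
    have := Phi_strictMono h2
    linarith
  · rw [hh]
    have k1 : Tendsto (fun s : ℝ => c + Real.sqrt 2 * s / σ₁ - s / σ₁) atTop atTop := by
      have : Tendsto (fun s : ℝ => (Real.sqrt 2 - 1) / σ₁ * s + c) atTop atTop :=
        tendsto_atTop_add_const_right _ c
          (Tendsto.const_mul_atTop (div_pos (sub_pos.2 hs2) hσ₁) tendsto_id)
      convert this using 2 with s
      field_simp
      ring
    have k2 : Tendsto (fun s : ℝ => -c - Real.sqrt 2 * s / σ₁ - s / σ₁) atTop atBot := by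
      have h2' : Tendsto (fun s : ℝ => (Real.sqrt 2 + 1) / σ₁ * s + c) atTop atTop :=
        tendsto_atTop_add_const_right _ c
          (Tendsto.const_mul_atTop (div_pos (by linarith) hσ₁) tendsto_id)
      have := tendsto_neg_atTop_atBot.comp h2'
      convert this using 2 with s
      simp only [Function.comp]
      field_simp
      ring
    have t1 : Tendsto (fun s : ℝ => Phi (c + Real.sqrt 2 * s / σ₁ - s / σ₁)) atTop (nhds 1) :=
      Phi_tendsto_atTop.comp k1
    have t2 : Tendsto (fun s : ℝ => Phi (-c - Real.sqrt 2 * s / σ₁ - s / σ₁)) atTop (nhds 0) :=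
      Phi_tendsto_atBot.comp k2
    have := t1.sub t2
    simp only [show -(σ₂ / σ₁) * PhiInv α = -c from by rw [hc]; ring]
    simpa using this
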